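/- Two distinct vertices v, w ∈ ℤ^d are *-neighbours if |w_i − v_i| ≤ 1 for all i. Suppose W ⊆ ℤ^{d−1} is finite and R ⊆ ℤ^{d−1} is the set of sites separated from infinity by W (no nearest-neighbour path from the site to infinity avoiding W). Then |R| ≤ |W|^{(d−1)/(d−2)} for d ≥ 3. -/

import Mathlib

/-!
Statement 10 (Loomis–Whitney separation bound): for d ≥ 3, if W ⊆ ℤ^{d−1} is
finite and R is the set of sites of ℤ^{d−1} separated from infinity by W (every
infinite self-avoiding nearest-neighbour path from the site meets W), then R is
finite with |R| ≤ |W|^{(d−1)/(d−2)}.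
-/

variable {n : ℕ}

def adjZ (v w : Fin n → ℤ) : Prop := (∑ i, |v i - w i|) = 1

/-- x is separated from infinity by W: every infinite injective
nearest-neighbour path from x meets W. -/
def separated (W : Finset (Fin n → ℤ)) (x : Fin n → ℤ) : Prop :=
  ∀ γ : ℕ → Fin n → ℤ, γ 0 = x → (∀ k, adjZ (γ k) (γ (k + 1))) →
    Function.Injective γ → ∃ k, γ k ∈ W


open Finset NNReal in
lemma hoelder_prod {ι τ : Type*} (s : Finset ι) (t : Finset τ) (f : ι → τ → ℝ≥0)
    (hs : s.Nonempty) :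
    ∑ x ∈ t, ∏ i ∈ s, f i x ^ ((s.card : ℝ)⁻¹) ≤
      ∏ i ∈ s, (∑ x ∈ t, f i x) ^ ((s.card : ℝ)⁻¹) := by
  have hcard : (s.card : ℝ) ≠ 0 := by
    exact_mod_cast (Finset.card_pos.mpr hs).ne'
  by_cases h0 : ∃ i ∈ s, (∑ x ∈ t, f i x) = 0
  · obtain ⟨i, his, hi⟩ := h0
    have hLHS : ∑ x ∈ t, ∏ j ∈ s, f j x ^ ((s.card : ℝ)⁻¹) = 0 := by
      refine Finset.sum_eq_zero fun x hx => ?_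
      refine Finset.prod_eq_zero his ?_
      have : f i x = 0 := by
        have := (Finset.sum_eq_zero_iff).mp hi x hx
        exact this
      rw [this, NNReal.zero_rpow (by positivity)]
    rw [hLHS]; exact zero_le
  · push_neg at h0
    set S : ι → ℝ≥0 := fun i => ∑ x ∈ t, f i x with hS
    have hSpos : ∀ i ∈ s, S i ≠ 0 := h0
    -- key pointwise AM-GM
    have key : ∑ x ∈ t, ∏ i ∈ s, (f i x / S i) ^ ((s.card : ℝ)⁻¹) ≤ 1 := by
      have hw : ∑ _i ∈ s, (s.card : ℝ≥0)⁻¹ = 1 := by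
        rw [Finset.sum_const, nsmul_eq_mul]
        rw [mul_inv_cancel₀ (by exact_mod_cast (Finset.card_pos.mpr hs).ne')]
      calc ∑ x ∈ t, ∏ i ∈ s, (f i x / S i) ^ ((s.card : ℝ)⁻¹)
          ≤ ∑ x ∈ t, ∑ i ∈ s, (s.card : ℝ≥0)⁻¹ * (f i x / S i) := by
            refine Finset.sum_le_sum fun x _ => ?_
            have := NNReal.geom_mean_le_arith_mean_weighted s
              (fun _ => (s.card : ℝ≥0)⁻¹) (fun i => f i x / S i) hw
            simpa using this
        _ = ∑ i ∈ s, (s.card : ℝ≥0)⁻¹ * (∑ x ∈ t, f i x / S i) := by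
            rw [Finset.sum_comm]
            exact Finset.sum_congr rfl fun i _ => by rw [Finset.mul_sum]
        _ = ∑ i ∈ s, (s.card : ℝ≥0)⁻¹ := by
            refine Finset.sum_congr rfl fun i hi => ?_
            rw [← Finset.sum_div, show (∑ x ∈ t, f i x) = S i from rfl,
              div_self (hSpos i hi), mul_one]
        _ = 1 := hw
    have expand : ∀ x ∈ t, ∏ i ∈ s, f i x ^ ((s.card : ℝ)⁻¹) =
        (∏ i ∈ s, (f i x / S i) ^ ((s.card : ℝ)⁻¹)) * ∏ i ∈ s, (S i) ^ ((s.card : ℝ)⁻¹) := by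
      intro x _
      rw [← Finset.prod_mul_distrib]
      refine Finset.prod_congr rfl fun i hi => ?_
      rw [← NNReal.mul_rpow, div_mul_cancel₀ _ (hSpos i hi)]
    calc ∑ x ∈ t, ∏ i ∈ s, f i x ^ ((s.card : ℝ)⁻¹)
        = (∑ x ∈ t, ∏ i ∈ s, (f i x / S i) ^ ((s.card : ℝ)⁻¹)) *
            ∏ i ∈ s, (S i) ^ ((s.card : ℝ)⁻¹) := by
          rw [Finset.sum_mul]; exact Finset.sum_congr rfl expand
      _ ≤ 1 * ∏ i ∈ s, (S i) ^ ((s.card : ℝ)⁻¹) := by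
          exact mul_le_mul_left key _
      _ = ∏ i ∈ s, (S i) ^ ((s.card : ℝ)⁻¹) := one_mul _

open Finset NNReal in
lemma lw_aux {ι : Type*} [Fintype ι] [DecidableEq ι] (s : Finset ι) :
    ∀ (A : Finset (ι → ℤ)), A.Nonempty →
    (∀ x ∈ A, ∀ y ∈ A, ∀ j, j ∉ s → x j = y j) →
    A.card ^ (s.card - 1) ≤ ∏ i ∈ s, (A.image fun x => Function.update x i 0).card := by
  induction s using Finset.induction_on with
  | empty =>
    intro A hA hagree
    simp
  | @insert i0 s' hi0 IH =>
    intro A hA hagree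
    rcases s'.eq_empty_or_nonempty with rfl | hs'
    · simp only [Finset.card_insert_of_notMem hi0, Finset.card_empty,
        Finset.prod_insert hi0, Finset.prod_empty, mul_one]
      simpa using Finset.card_pos.mpr (hA.image (fun x => Function.update x i0 0))
    -- main case
    set m' := s'.card with hm'
    have hm'pos : 0 < m' := Finset.card_pos.mpr hs'
    set π : ι → (ι → ℤ) → (ι → ℤ) := fun i x => Function.update x i 0 with hπ
    set T : Finset ℤ := A.image fun x => x i0 with hT
    set At : ℤ → Finset (ι → ℤ) := fun c => A.filter fun x => x i0 = c with hAt
    have hcardsum : A.card = ∑ c ∈ T, (At c).card :=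
      Finset.card_eq_sum_card_image (fun x => x i0) A
    -- slice facts
    have hslice_le : ∀ c ∈ T, (At c).card ≤ (A.image (π i0)).card := by
      intro c hc
      have hinj : Set.InjOn (π i0) (At c) := by
        intro x hx y hy hxy
        have hx' := Finset.mem_filter.mp hx
        have hy' := Finset.mem_filter.mp hy
        funext j
        by_cases hj : j = i0
        · subst hj; rw [hx'.2, hy'.2]
        · have := congrFun hxy j
          simpa [π, Function.update_apply, hj] using this
      calc (At c).card = ((At c).image (π i0)).card :=
            (Finset.card_image_of_injOn hinj).symm
        _ ≤ (A.image (π i0)).card :=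
            Finset.card_le_card (Finset.image_subset_image (Finset.filter_subset _ _))
    have hIH : ∀ c ∈ T, (At c).card ^ (m' - 1) ≤ ∏ i ∈ s', ((At c).image (π i)).card := by
      intro c hc
      obtain ⟨x, hx⟩ := Finset.mem_image.mp hc
      refine IH (At c) ⟨x, Finset.mem_filter.mpr ⟨hx.1, hx.2⟩⟩ ?_
      intro x hx y hy j hj
      by_cases hji : j = i0
      · subst hji
        rw [(Finset.mem_filter.mp hx).2, (Finset.mem_filter.mp hy).2]
      · exact hagree x (Finset.mem_filter.mp hx).1 y (Finset.mem_filter.mp hy).1 j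
          (by simp [hji, hj])
    have hslicepow : ∀ c ∈ T, (At c).card ^ m' ≤
        (A.image (π i0)).card * ∏ i ∈ s', ((At c).image (π i)).card := by
      intro c hc
      calc (At c).card ^ m' = (At c).card * (At c).card ^ (m' - 1) := by
            rw [← pow_succ']; congr 1; omega
        _ ≤ (A.image (π i0)).card * ∏ i ∈ s', ((At c).image (π i)).card :=
            Nat.mul_le_mul (hslice_le c hc) (hIH c hc)
    -- disjoint slices for i ≠ i0
    have hdisj : ∀ i ∈ s', ∑ c ∈ T, ((At c).image (π i)).card ≤ (A.image (π i)).card := by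
      intro i hi
      have hii0 : i ≠ i0 := fun h => hi0 (h ▸ hi)
      have hsub : T.biUnion (fun c => (At c).image (π i)) ⊆ A.image (π i) := by
        intro y hy
        obtain ⟨c, _, hy'⟩ := Finset.mem_biUnion.mp hy
        exact Finset.image_subset_image (Finset.filter_subset _ _) hy'
      have hpd : ∀ c₁ ∈ T, ∀ c₂ ∈ T, c₁ ≠ c₂ →
          Disjoint ((At c₁).image (π i)) ((At c₂).image (π i)) := by
        intro c₁ _ c₂ _ hne
        refine Finset.disjoint_left.mpr fun y hy1 hy2 => ?_
        obtain ⟨x1, hx1, rfl⟩ := Finset.mem_image.mp hy1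
        obtain ⟨x2, hx2, he⟩ := Finset.mem_image.mp hy2
        have h1 : x1 i0 = c₁ := (Finset.mem_filter.mp hx1).2
        have h2 : x2 i0 = c₂ := (Finset.mem_filter.mp hx2).2
        have := congrFun he i0
        rw [hπ] at this
        simp only [Function.update_apply, if_neg (Ne.symm hii0 : i0 ≠ i)] at this
        exact hne (h1 ▸ h2 ▸ this.symm)
      calc ∑ c ∈ T, ((At c).image (π i)).card
          = (T.biUnion fun c => (At c).image (π i)).card :=
            (Finset.card_biUnion hpd).symm
        _ ≤ (A.image (π i)).card := Finset.card_le_card hsub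
    -- now pass to ℝ≥0
    have hmR : ((m' : ℝ))⁻¹ * (m' : ℝ) = 1 := by
      rw [inv_mul_cancel₀]; exact_mod_cast hm'pos.ne'
    have key : (A.card : ℝ≥0) ≤
        ((A.image (π i0)).card : ℝ≥0) ^ ((m' : ℝ)⁻¹) *
          ∏ i ∈ s', (((A.image (π i)).card : ℝ≥0)) ^ ((m' : ℝ)⁻¹) := by
      have step1 : (A.card : ℝ≥0) = ∑ c ∈ T, ((At c).card : ℝ≥0) := by
        exact_mod_cast hcardsum
      have step2 : ∀ c ∈ T, ((At c).card : ℝ≥0) ≤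
          (((A.image (π i0)).card : ℝ≥0) * ∏ i ∈ s', (((At c).image (π i)).card : ℝ≥0))
            ^ ((m' : ℝ)⁻¹) := by
        intro c hc
        have h1 : ((At c).card : ℝ≥0) =
            (((At c).card : ℝ≥0) ^ (m' : ℕ)) ^ ((m' : ℝ)⁻¹) := by
          rw [← NNReal.rpow_natCast _ m', ← NNReal.rpow_mul, mul_comm,
            hmR, NNReal.rpow_one]
        rw [h1]
        refine NNReal.rpow_le_rpow ?_ (by positivity)
        exact_mod_cast hslicepow c hc
      calc (A.card : ℝ≥0) = ∑ c ∈ T, ((At c).card : ℝ≥0) := step1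
        _ ≤ ∑ c ∈ T, (((A.image (π i0)).card : ℝ≥0) *
              ∏ i ∈ s', (((At c).image (π i)).card : ℝ≥0)) ^ ((m' : ℝ)⁻¹) :=
            Finset.sum_le_sum step2
        _ = ((A.image (π i0)).card : ℝ≥0) ^ ((m' : ℝ)⁻¹) *
              ∑ c ∈ T, ∏ i ∈ s', (((At c).image (π i)).card : ℝ≥0) ^ ((m' : ℝ)⁻¹) := by
            rw [Finset.mul_sum]
            refine Finset.sum_congr rfl fun c _ => ?_
            rw [NNReal.mul_rpow, NNReal.finset_prod_rpow]
        _ ≤ ((A.image (π i0)).card : ℝ≥0) ^ ((m' : ℝ)⁻¹) *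
              ∏ i ∈ s', (∑ c ∈ T, (((At c).image (π i)).card : ℝ≥0)) ^ ((m' : ℝ)⁻¹) := by
            refine mul_le_mul_right ?_ _
            exact hoelder_prod s' T (fun i c => (((At c).image (π i)).card : ℝ≥0)) hs'
        _ ≤ ((A.image (π i0)).card : ℝ≥0) ^ ((m' : ℝ)⁻¹) *
              ∏ i ∈ s', (((A.image (π i)).card : ℝ≥0)) ^ ((m' : ℝ)⁻¹) := by
            refine mul_le_mul_right (Finset.prod_le_prod (fun _ _ => zero_le)
              fun i hi => NNReal.rpow_le_rpow ?_ (by positivity)) _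
            exact_mod_cast hdisj i hi
    -- raise to the m' power
    have final : (A.card : ℝ≥0) ^ (m' : ℕ) ≤
        ((A.image (π i0)).card : ℝ≥0) * ∏ i ∈ s', (((A.image (π i)).card : ℝ≥0)) := by
      calc (A.card : ℝ≥0) ^ (m' : ℕ)
          ≤ (((A.image (π i0)).card : ℝ≥0) ^ ((m' : ℝ)⁻¹) *
              ∏ i ∈ s', (((A.image (π i)).card : ℝ≥0)) ^ ((m' : ℝ)⁻¹)) ^ (m' : ℕ) :=
            pow_le_pow_left' key m'
        _ = ((A.image (π i0)).card : ℝ≥0) * ∏ i ∈ s', (((A.image (π i)).card : ℝ≥0)) := by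
            rw [mul_pow, ← Finset.prod_pow]
            have hp : ∀ y : ℝ≥0, (y ^ ((m' : ℝ)⁻¹)) ^ (m' : ℕ) = y := by
              intro y
              rw [← NNReal.rpow_natCast (y ^ ((m' : ℝ)⁻¹)) m', ← NNReal.rpow_mul, hmR,
                NNReal.rpow_one]
            rw [hp]
            exact congrArg _ (Finset.prod_congr rfl fun i _ => hp _)
    have : A.card ^ m' ≤ (A.image (π i0)).card * ∏ i ∈ s', ((A.image (π i)).card) := by
      exact_mod_cast final
    calc A.card ^ ((insert i0 s').card - 1) = A.card ^ m' := by
          rw [Finset.card_insert_of_notMem hi0, Nat.add_sub_cancel]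
      _ ≤ (A.image (π i0)).card * ∏ i ∈ s', ((A.image (π i)).card) := this
      _ = ∏ i ∈ insert i0 s', ((A.image fun x => Function.update x i 0).card) := by
          rw [Finset.prod_insert hi0]

open Finset NNReal in
/-- straight-line path hits W -/
lemma hits (W : Finset (Fin n → ℤ)) {x : Fin n → ℤ} (hx : separated W x) (i : Fin n) :
    ∃ k : ℕ, Function.update x i (x i + k) ∈ W := by
  set γ : ℕ → Fin n → ℤ := fun k => Function.update x i (x i + k) with hγ
  have h0 : γ 0 = x := by simp [hγ]
  have hadj : ∀ k, adjZ (γ k) (γ (k + 1)) := by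
    intro k
    unfold adjZ
    have : ∀ j, |γ k j - γ (k + 1) j| = if j = i then 1 else 0 := by
      intro j
      by_cases hj : j = i
      · subst hj
        have h1 : γ k j - γ (k + 1) j = -1 := by
          simp only [hγ, Function.update_self]
          push_cast
          ring
        rw [h1, if_pos rfl]
        decide
      · simp [hγ, Function.update_apply, hj]
    rw [Finset.sum_congr rfl fun j _ => this j]
    simp
  have hinj : Function.Injective γ := by
    intro k l hkl
    have := congrFun hkl i
    simp [hγ, Function.update_self] at this
    exact_mod_cast this
  obtain ⟨k, hk⟩ := hx γ h0 hadj hinj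
  exact ⟨k, by rwa [hγ] at hk⟩

lemma proj_mem (W : Finset (Fin n → ℤ)) {x : Fin n → ℤ} (hx : separated W x) (i : Fin n) :
    Function.update x i 0 ∈ W.image fun y => Function.update y i 0 := by
  obtain ⟨k, hk⟩ := hits W hx i
  exact Finset.mem_image.mpr ⟨_, hk, by rw [Function.update_idem]⟩


open Finset NNReal in
theorem loomis_whitney_separation (d : ℕ) (hd : 3 ≤ d)
    (W : Finset (Fin (d - 1) → ℤ)) :
    {x : Fin (d - 1) → ℤ | separated W x}.Finite ∧
    (({x : Fin (d - 1) → ℤ | separated W x}.ncard : ℝ) ≤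
      (W.card : ℝ) ^ (((d : ℝ) - 1) / ((d : ℝ) - 2))) := by
  have hn2 : 2 ≤ d - 1 := by omega
  set R := {x : Fin (d - 1) → ℤ | separated W x} with hR
  let i0 : Fin (d - 1) := ⟨0, by omega⟩
  let i1 : Fin (d - 1) := ⟨1, by omega⟩
  have hi01 : i1 ≠ i0 := by simp [i0, i1, Fin.ext_iff]
  have hfin : R.Finite := by
    have hsub : R ⊆ (fun p : (Fin (d - 1) → ℤ) × (Fin (d - 1) → ℤ) =>
        Function.update p.1 i0 (p.2 i0)) '' ((W ×ˢ W : Finset _) : Set _) := by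
      intro x hx
      obtain ⟨k0, hk0⟩ := hits W hx i0
      obtain ⟨k1, hk1⟩ := hits W hx i1
      refine ⟨(Function.update x i0 (x i0 + k0), Function.update x i1 (x i1 + k1)), ?_, ?_⟩
      · simp [Finset.mem_coe, Finset.mem_product, hk0, hk1]
      · show Function.update (Function.update x i0 (x i0 + k0)) i0
            (Function.update x i1 (x i1 + k1) i0) = x
        funext j
        rcases eq_or_ne j i0 with rfl | hj
        · simp [Function.update_apply, hi01, if_neg hi01.symm.elim]
        · simp [Function.update_apply, hj]
    exact Set.Finite.subset (Set.Finite.image _ (Finset.finite_toSet _)) hsub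
  refine ⟨hfin, ?_⟩
  set A := hfin.toFinset with hA
  have hncard : R.ncard = A.card := by
    exact Set.ncard_eq_toFinset_card R hfin
  rcases A.eq_empty_or_nonempty with hAe | hAne
  · rw [hncard, hAe]
    simp only [Finset.card_empty, Nat.cast_zero]
    positivity
  -- projections of A inside projections of W
  have hproj : ∀ i, (A.image fun x => Function.update x i 0).card ≤ W.card := by
    intro i
    have hsub : (A.image fun x => Function.update x i 0) ⊆
        W.image fun x => Function.update x i 0 := by
      intro y hy
      obtain ⟨x, hx, rfl⟩ := Finset.mem_image.mp hy
      have hxR : x ∈ R := by rwa [hA, Set.Finite.mem_toFinset] at hx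
      exact proj_mem W hxR i
    exact le_trans (Finset.card_le_card hsub) (Finset.card_image_le)
  have hLW : A.card ^ (d - 1 - 1) ≤ W.card ^ (d - 1) := by
    have h1 := lw_aux (Finset.univ : Finset (Fin (d - 1))) A hAne
      (fun x _ y _ j hj => absurd (Finset.mem_univ j) hj)
    have h2 : ∏ i : Fin (d - 1), (A.image fun x => Function.update x i 0).card ≤
        ∏ _i : Fin (d - 1), W.card := Finset.prod_le_prod' fun i _ => hproj i
    simp only [Finset.card_univ, Fintype.card_fin, Finset.prod_const] at h1 h2 ⊢
    exact le_trans h1 h2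
  -- numeric conclusion
  rw [hncard]
  have hm : (1 : ℕ) ≤ d - 2 := by omega
  have hcast : ((d - 1 - 1 : ℕ) : ℝ) = (d : ℝ) - 2 := by
    have : d - 1 - 1 = d - 2 := by omega
    rw [this]
    push_cast [Nat.cast_sub (by omega : 2 ≤ d)]
    ring
  have hcast2 : ((d - 1 : ℕ) : ℝ) = (d : ℝ) - 1 := by
    push_cast [Nat.cast_sub (by omega : 1 ≤ d)]
    ring
  have hmpos : (0 : ℝ) < (d : ℝ) - 2 := by
    have : (3 : ℝ) ≤ d := by exact_mod_cast hd
    linarith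
  have hstep : ((A.card : ℝ) ^ ((d - 1 - 1 : ℕ) : ℝ)) ≤ ((W.card : ℝ) ^ ((d - 1 : ℕ) : ℝ)) := by
    rw [Real.rpow_natCast, Real.rpow_natCast]
    exact_mod_cast hLW
  have hA1 : (A.card : ℝ) = ((A.card : ℝ) ^ ((d - 1 - 1 : ℕ) : ℝ)) ^ (((d : ℝ) - 2)⁻¹) := by
    rw [← Real.rpow_mul (by positivity), hcast, mul_inv_cancel₀ hmpos.ne', Real.rpow_one]
  calc (A.card : ℝ) = ((A.card : ℝ) ^ ((d - 1 - 1 : ℕ) : ℝ)) ^ (((d : ℝ) - 2)⁻¹) := hA1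
    _ ≤ ((W.card : ℝ) ^ ((d - 1 : ℕ) : ℝ)) ^ (((d : ℝ) - 2)⁻¹) := by
        exact Real.rpow_le_rpow (by positivity) hstep (by positivity)
    _ = (W.card : ℝ) ^ (((d : ℝ) - 1) / ((d : ℝ) - 2)) := by
        rw [← Real.rpow_mul (x := (W.card : ℝ)) (Nat.cast_nonneg _), hcast2, div_eq_mul_inv]
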